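/- In ℝ[[x]], substituting the power series x·(1+x)⁻¹ (which has zero constant term) into the Catalan generating function C gives 1 + x·M(x); that is, C(x/(1+x)) = 1 + x·M(x), where M(x) is the Motzkin generating function. -/

import Mathlib

open PowerSeries Finset

/-- The generating function of the Catalan numbers. -/
noncomputable def catalanGF : PowerSeries ℝ :=
  PowerSeries.mk fun n => (catalan n : ℝ)

/-- The generating function of the Motzkin numbers `Mₙ = ∑_{k=0}^{⌊n/2⌋} binom(n,2k)·Cₖ`. -/
noncomputable def motzkinGF : PowerSeries ℝ :=
  PowerSeries.mk fun n =>
    ((∑ k ∈ Finset.range (n / 2 + 1), n.choose (2 * k) * catalan k : ℕ) : ℝ)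

/-- Formal substitution of a power series `g` with zero constant term into `f`:
the coefficient of `x^n` in `f(g(x))` is `∑_{k=0}^{n} fₖ · [xⁿ](g^k)`. -/
noncomputable def psComp (f g : PowerSeries ℝ) : PowerSeries ℝ :=
  PowerSeries.mk fun n =>
    ∑ k ∈ Finset.range (n + 1), PowerSeries.coeff (R := ℝ) k f * PowerSeries.coeff (R := ℝ) n (g ^ k)

lemma coeff_psComp (f g : PowerSeries ℝ) (n : ℕ) :
    PowerSeries.coeff n (psComp f g) =
      ∑ k ∈ range (n + 1), PowerSeries.coeff k f * PowerSeries.coeff n (g ^ k) := by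
  simp [psComp]

lemma coeff_pow_zero {g : PowerSeries ℝ} (hg : constantCoeff g = 0) {n k : ℕ} (h : n < k) :
    PowerSeries.coeff n (g ^ k) = 0 := by
  obtain ⟨u, hu⟩ := pow_dvd_pow_of_dvd (PowerSeries.X_dvd_iff.2 hg) k
  rw [hu, PowerSeries.coeff_X_pow_mul', if_neg (by omega)]

lemma coeff_psComp' {g : PowerSeries ℝ} (hg : constantCoeff g = 0) (f : PowerSeries ℝ)
    {n N : ℕ} (h : n ≤ N) :
    PowerSeries.coeff n (psComp f g) =
      ∑ k ∈ range (N + 1), PowerSeries.coeff k f * PowerSeries.coeff n (g ^ k) := by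
  rw [coeff_psComp]
  apply Finset.sum_subset
  · exact Finset.range_subset_range.2 (by omega)
  · intro x hx hx2
    simp only [mem_range] at hx hx2
    rw [coeff_pow_zero hg (by omega), mul_zero]

lemma psComp_add (f1 f2 g : PowerSeries ℝ) :
    psComp (f1 + f2) g = psComp f1 g + psComp f2 g := by
  ext n
  simp [coeff_psComp, add_mul, Finset.sum_add_distrib]

lemma psComp_one (g : PowerSeries ℝ) : psComp 1 g = 1 := by
  ext n
  rw [coeff_psComp, Finset.sum_eq_single 0]
  · simp
  · intro b _ hb
    simp [PowerSeries.coeff_one, hb]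
  · simp

lemma psComp_X {g : PowerSeries ℝ} (hg : constantCoeff g = 0) : psComp X g = g := by
  ext n
  rw [coeff_psComp, Finset.sum_eq_single 1]
  · simp
  · intro b _ hb
    simp [PowerSeries.coeff_X, hb]
  · intro h
    simp only [mem_range, not_lt] at h
    have hn : n = 0 := by omega
    subst hn
    rw [pow_one, PowerSeries.coeff_zero_eq_constantCoeff_apply, hg, mul_zero]

lemma psComp_mul {g : PowerSeries ℝ} (hg : constantCoeff g = 0) (f1 f2 : PowerSeries ℝ) :
    psComp (f1 * f2) g = psComp f1 g * psComp f2 g := by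
  ext n
  set F : ℕ × ℕ → ℝ := fun p =>
    PowerSeries.coeff p.1 f1 * PowerSeries.coeff p.2 f2 *
      PowerSeries.coeff n (g ^ (p.1 + p.2)) with hF
  have hdisj : (↑(range (n + 1)) : Set ℕ).PairwiseDisjoint (fun k => antidiagonal k) := by
    intro a _ b _ hab
    rw [Function.onFun, Finset.disjoint_left]
    intro p hp hq
    rw [HasAntidiagonal.mem_antidiagonal] at hp hq
    exact hab (hp ▸ hq.symm ▸ rfl)
  have hset : (range (n + 1)).biUnion (fun k => antidiagonal k)
      = (range (n + 1) ×ˢ range (n + 1)).filter (fun p => p.1 + p.2 ≤ n) := by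
    ext p
    simp only [mem_biUnion, mem_range, HasAntidiagonal.mem_antidiagonal, mem_filter, mem_product]
    constructor
    · rintro ⟨k, hk, rfl⟩
      omega
    · intro hp
      exact ⟨p.1 + p.2, by omega, rfl⟩
  have hL : PowerSeries.coeff n (psComp (f1 * f2) g)
      = ∑ p ∈ (range (n + 1) ×ˢ range (n + 1)).filter (fun p => p.1 + p.2 ≤ n), F p := by
    rw [coeff_psComp, ← hset, Finset.sum_biUnion hdisj]
    apply Finset.sum_congr rfl
    intro k _
    rw [PowerSeries.coeff_mul, Finset.sum_mul]
    apply Finset.sum_congr rfl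
    intro p hp
    rw [HasAntidiagonal.mem_antidiagonal] at hp
    simp only [hF]
    rw [← hp]
  have hfull : ∑ p ∈ (range (n + 1) ×ˢ range (n + 1)).filter (fun p => p.1 + p.2 ≤ n), F p
      = ∑ p ∈ range (n + 1) ×ˢ range (n + 1), F p := by
    apply Finset.sum_subset (Finset.filter_subset _ _)
    intro p hp hp2
    rw [Finset.mem_filter, not_and] at hp2
    have : n < p.1 + p.2 := by
      by_contra hc
      exact (hp2 hp) (by omega)
    simp only [hF]
    rw [coeff_pow_zero hg this, mul_zero]
  have hR : PowerSeries.coeff n (psComp f1 g * psComp f2 g)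
      = ∑ p ∈ range (n + 1) ×ˢ range (n + 1), F p := by
    rw [PowerSeries.coeff_mul]
    have step : ∀ p ∈ antidiagonal n,
        PowerSeries.coeff p.1 (psComp f1 g) * PowerSeries.coeff p.2 (psComp f2 g)
        = ∑ q ∈ range (n + 1) ×ˢ range (n + 1),
            (PowerSeries.coeff q.1 f1 * PowerSeries.coeff p.1 (g ^ q.1)) *
            (PowerSeries.coeff q.2 f2 * PowerSeries.coeff p.2 (g ^ q.2)) := by
      intro p hp
      rw [HasAntidiagonal.mem_antidiagonal] at hp
      rw [coeff_psComp' hg f1 (show p.1 ≤ n by omega),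
        coeff_psComp' hg f2 (show p.2 ≤ n by omega), Finset.sum_mul_sum,
        ← Finset.sum_product']
    rw [Finset.sum_congr rfl step, Finset.sum_comm]
    apply Finset.sum_congr rfl
    intro q _
    have : ∑ p ∈ antidiagonal n,
        (PowerSeries.coeff q.1 f1 * PowerSeries.coeff p.1 (g ^ q.1)) *
        (PowerSeries.coeff q.2 f2 * PowerSeries.coeff p.2 (g ^ q.2))
        = PowerSeries.coeff q.1 f1 * PowerSeries.coeff q.2 f2 *
          ∑ p ∈ antidiagonal n,
            PowerSeries.coeff p.1 (g ^ q.1) * PowerSeries.coeff p.2 (g ^ q.2) := by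
      rw [Finset.mul_sum]
      apply Finset.sum_congr rfl
      intros
      ring
    rw [this, ← PowerSeries.coeff_mul, ← pow_add]
  rw [hL, hfull, hR]

lemma catalanGF_eq : catalanGF = 1 + X * catalanGF ^ 2 := by
  ext n
  cases n with
  | zero => simp [catalanGF]
  | succ m =>
    rw [map_add, PowerSeries.coeff_one, if_neg m.succ_ne_zero, zero_add,
      PowerSeries.coeff_succ_X_mul, sq, PowerSeries.coeff_mul]
    simp only [catalanGF, coeff_mk]
    rw [catalan_succ']
    push_cast
    rfl

/-- The series `X^2/(1-X)^2`. -/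
noncomputable def hsq : PowerSeries ℝ :=
  X ^ 2 * ((PowerSeries.invOneSubPow ℝ 2 : (PowerSeries ℝ)ˣ) : PowerSeries ℝ)

lemma constantCoeff_hsq : constantCoeff hsq = 0 := by
  rw [hsq, map_mul, map_pow, PowerSeries.constantCoeff_X]
  norm_num

lemma invOneSubPow_pow (d k : ℕ) :
    (PowerSeries.invOneSubPow ℝ d) ^ k = PowerSeries.invOneSubPow ℝ (d * k) := by
  rw [PowerSeries.invOneSubPow_eq_inv_one_sub_pow, PowerSeries.invOneSubPow_eq_inv_one_sub_pow,
    ← pow_mul]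

lemma coeff_hsq_pow (n k : ℕ) (hk : 1 ≤ k) :
    PowerSeries.coeff n (hsq ^ k) =
      if 2 * k ≤ n then ((n - 1).choose (2 * k - 1) : ℝ) else 0 := by
  obtain ⟨j, rfl⟩ : ∃ j, k = j + 1 := ⟨k - 1, by omega⟩
  rw [hsq, mul_pow, ← pow_mul, ← Units.val_pow_eq_pow_val, invOneSubPow_pow,
    PowerSeries.coeff_X_pow_mul']
  have h3 : 2 * (j + 1) = (2 * j + 1) + 1 := by omega
  rw [h3, PowerSeries.invOneSubPow_val_succ_eq_mk_add_choose, coeff_mk]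
  split_ifs with h
  · have e : 2 * j + 1 + (n - (2 * j + 1 + 1)) = n - 1 := by omega
    have e2 : 2 * j + 1 + 1 - 1 = 2 * j + 1 := by omega
    rw [e, e2]
  · rfl

lemma motzkin_nat_key (m : ℕ) :
    (∑ k ∈ range ((m + 1) / 2 + 1), (m + 1).choose (2 * k) * catalan k)
      = (∑ k ∈ range (m / 2 + 1), m.choose (2 * k) * catalan k)
        + ∑ k ∈ range (m + 2), (if 1 ≤ k then m.choose (2 * k - 1) else 0) * catalan k := by
  have e1 : (∑ k ∈ range ((m + 1) / 2 + 1), (m + 1).choose (2 * k) * catalan k)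
      = ∑ k ∈ range (m + 2), (m + 1).choose (2 * k) * catalan k := by
    apply Finset.sum_subset (Finset.range_subset_range.2 (by omega))
    intro x hx hx2
    simp only [mem_range] at hx hx2
    rw [Nat.choose_eq_zero_of_lt (by omega), zero_mul]
  have e2 : (∑ k ∈ range (m / 2 + 1), m.choose (2 * k) * catalan k)
      = ∑ k ∈ range (m + 2), m.choose (2 * k) * catalan k := by
    apply Finset.sum_subset (Finset.range_subset_range.2 (by omega))
    intro x hx hx2
    simp only [mem_range] at hx hx2
    rw [Nat.choose_eq_zero_of_lt (by omega), zero_mul]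
  rw [e1, e2, ← Finset.sum_add_distrib]
  apply Finset.sum_congr rfl
  intro k _
  rw [← add_mul]
  congr 1
  rcases Nat.eq_zero_or_pos k with hk | hk
  · subst hk; simp
  · have hk' : 1 ≤ k := hk
    rw [if_pos hk']
    obtain ⟨j, rfl⟩ : ∃ j, k = j + 1 := ⟨k - 1, by omega⟩
    have h1 : 2 * (j + 1) = (2 * j + 1) + 1 := by omega
    rw [h1, Nat.choose_succ_succ]
    have h2 : (2 * j + 1) + 1 - 1 = 2 * j + 1 := by omega
    rw [h2]
    simp only [Nat.succ_eq_add_one]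
    omega

lemma psComp_catalan_hsq : psComp catalanGF hsq = (1 - X) * motzkinGF := by
  ext n
  rw [sub_mul, one_mul, map_sub, coeff_psComp]
  cases n with
  | zero =>
    simp [motzkinGF, catalanGF]
  | succ m =>
    rw [PowerSeries.coeff_succ_X_mul]
    simp only [motzkinGF, coeff_mk, catalanGF]
    rw [eq_sub_iff_add_eq, motzkin_nat_key m]
    push_cast
    rw [add_comm]
    congr 1
    apply Finset.sum_congr rfl
    intro k _
    rcases Nat.eq_zero_or_pos k with hk | hk
    · subst hk
      simp
    · have hk' : 1 ≤ k := hk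
      rw [coeff_hsq_pow _ _ hk', if_pos hk']
      split_ifs with h2
      · rw [show m + 1 - 1 = m from rfl]
        ring
      · rw [Nat.choose_eq_zero_of_lt (by omega)]
        simp

lemma motzkin_eq : (1 - X) * motzkinGF = 1 + X ^ 2 * motzkinGF ^ 2 := by
  have h1 : ((PowerSeries.invOneSubPow ℝ 2 : (PowerSeries ℝ)ˣ) : PowerSeries ℝ)
      * (1 - X) ^ 2 = 1 := by
    have := (PowerSeries.invOneSubPow ℝ 2).val_inv
    rwa [PowerSeries.invOneSubPow_inv_eq_one_sub_pow] at this
  have hS : psComp catalanGF hsq = 1 + hsq * (psComp catalanGF hsq) ^ 2 := by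
    conv_lhs => rw [catalanGF_eq]
    rw [psComp_add, psComp_one, sq, sq, psComp_mul constantCoeff_hsq,
      psComp_mul constantCoeff_hsq, psComp_X constantCoeff_hsq]
  rw [psComp_catalan_hsq] at hS
  rw [hsq] at hS
  linear_combination hS + X ^ 2 * motzkinGF ^ 2 * h1

/-- `C(x/(1+x)) = 1 + x·M(x)` in `ℝ[[x]]`. -/
theorem stmt_3 :
    psComp catalanGF (PowerSeries.X * (1 + PowerSeries.X)⁻¹) =
      1 + PowerSeries.X * motzkinGF := by
  set g : PowerSeries ℝ := X * (1 + X)⁻¹ with hgdef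
  have hg : constantCoeff g = 0 := by
    rw [hgdef, map_mul, PowerSeries.constantCoeff_X, zero_mul]
  have hinv : (1 + X : PowerSeries ℝ) * (1 + X)⁻¹ = 1 := by
    apply PowerSeries.mul_inv_cancel
    rw [map_add, PowerSeries.constantCoeff_X, constantCoeff_one]
    norm_num
  set S : PowerSeries ℝ := psComp catalanGF g with hSdef
  set T : PowerSeries ℝ := 1 + X * motzkinGF with hTdef
  have hS : S = 1 + g * S ^ 2 := by
    rw [hSdef]
    conv_lhs => rw [catalanGF_eq]
    rw [psComp_add, psComp_one, sq, sq, psComp_mul hg, psComp_mul hg, psComp_X hg]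
  have hM := motzkin_eq
  have hT : T = 1 + g * T ^ 2 := by
    rw [hTdef, hgdef]
    linear_combination (X * (1 + X)⁻¹) * hM - (X * motzkinGF) * hinv
  have key : (S - T) * (1 - g * (S + T)) = 0 := by
    linear_combination hS - hT
  have hne : (1 - g * (S + T) : PowerSeries ℝ) ≠ 0 := by
    intro hcon
    have : constantCoeff (1 - g * (S + T)) = 0 := by rw [hcon, map_zero]
    rw [map_sub, map_mul, hg, zero_mul, map_one, sub_zero] at this
    exact one_ne_zero this
  rcases mul_eq_zero.mp key with h | h
  · have : S = T := sub_eq_zero.mp h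
    exact this
  · exact absurd h hne
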